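/- Let A_1, ..., A_K be Hermitian operators with H = Σ_{k=1}^K A_k and S(t) = e^{-itA_K} ··· e^{-itA_1}. Then for all t ∈ ℝ, (d/dt) S(t) − (−iH) S(t) = Σ_{j=2}^{K} ( e^{-itA_K} ··· e^{-itA_{j+1}} ) · [ e^{-itA_j}, −i Σ_{ℓ=1}^{j-1} A_ℓ ] · ( e^{-itA_{j-1}} ··· e^{-itA_1} ), where in each product the factor with the largest index stands furthest to the left. -/

import Mathlib

open NormedSpace

section Aux

variable {𝔸 : Type*} [NormedRing 𝔸] [NormedAlgebra ℂ 𝔸] [CompleteSpace 𝔸]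

lemma exp_deriv_aux (B : 𝔸) (t : ℝ) :
    HasDerivAt (fun s : ℝ => exp ((-(Complex.I * s)) • B))
      (((-Complex.I) • B) * exp ((-(Complex.I * t)) • B)) t := by
  have h : ∀ z : ℂ, (-(Complex.I * z)) • B = z • ((-Complex.I) • B) := by
    intro z; rw [smul_smul]; ring_nf
  simp only [h]
  have h2 : HasDerivAt (fun y : ℝ => (y : ℂ)) 1 t := Complex.ofRealCLM.hasDerivAt
  simpa [Function.comp_def] using (hasDerivAt_exp_smul_const' ((-Complex.I) • B) ((t : ℝ) : ℂ)).scomp t h2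

lemma prod_split (A : ℕ → 𝔸) (K n : ℕ) (s : ℝ) :
    ((List.range (n + 1)).map fun m => exp ((-(Complex.I * s)) • A (K + 1 - m))).prod
      = exp ((-(Complex.I * s)) • A (K + 1)) *
        ((List.range n).map fun m => exp ((-(Complex.I * s)) • A (K - m))).prod := by
  rw [List.range_succ_eq_map, List.map_cons, List.prod_cons, List.map_map]
  congr 1
  refine congrArg List.prod (List.map_congr_left fun m _ => ?_)
  simp [Function.comp, Nat.succ_sub_succ]

lemma prod_deriv_aux (A : ℕ → 𝔸) (K : ℕ) (t : ℝ) :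
    HasDerivAt
      (fun s : ℝ =>
        ((List.range K).map fun m => exp ((-(Complex.I * s)) • A (K - m))).prod)
      ((-Complex.I) • ((∑ k ∈ Finset.Icc 1 K, A k) *
          ((List.range K).map fun m => exp ((-(Complex.I * t)) • A (K - m))).prod) +
        ∑ j ∈ Finset.Icc 2 K,
          ((List.range (K - j)).map fun m => exp ((-(Complex.I * t)) • A (K - m))).prod *
            ⁅exp ((-(Complex.I * t)) • A j),
              (-Complex.I) • ∑ ℓ ∈ Finset.Icc 1 (j - 1), A ℓ⁆ *
            ((List.range (j - 1)).map fun m =>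
              exp ((-(Complex.I * t)) • A (j - 1 - m))).prod) t := by
  induction K with
  | zero =>
      simp only [List.range_zero, List.map_nil, List.prod_nil]
      have h1 : Finset.Icc 1 0 = (∅ : Finset ℕ) := by decide
      have h2 : Finset.Icc 2 0 = (∅ : Finset ℕ) := by decide
      rw [h1, h2]
      simpa using hasDerivAt_const t (1 : 𝔸)
  | succ K ih =>
      have hfun : (fun s : ℝ =>
          ((List.range (K + 1)).map fun m =>
            exp ((-(Complex.I * s)) • A (K + 1 - m))).prod)
          = fun s : ℝ => exp ((-(Complex.I * s)) • A (K + 1)) *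
              ((List.range K).map fun m => exp ((-(Complex.I * s)) • A (K - m))).prod :=
        funext fun s => prod_split A K K s
      rw [hfun]
      have hd := (exp_deriv_aux (A (K + 1)) t).mul ih
      convert hd using 1
      · rfl
      rcases Nat.eq_zero_or_pos K with rfl | hK
      · simp [show Finset.Icc 2 1 = (∅ : Finset ℕ) from by decide,
          show Finset.Icc 1 0 = (∅ : Finset ℕ) from by decide,
          show Finset.Icc 1 1 = ({1} : Finset ℕ) from by decide, smul_mul_assoc, List.range_succ]
      rw [Finset.sum_Icc_succ_top (a := 2) (b := K) (by omega),
          Finset.sum_Icc_succ_top (a := 1) (b := K) (by omega)]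
      simp only [Nat.add_sub_cancel, Nat.sub_self, List.range_zero, List.map_nil,
        List.prod_nil, one_mul]
      have hsum : (∑ j ∈ Finset.Icc 2 K,
          ((List.range (K + 1 - j)).map fun m =>
            exp ((-(Complex.I * t)) • A (K + 1 - m))).prod *
            ⁅exp ((-(Complex.I * t)) • A j),
              (-Complex.I) • ∑ ℓ ∈ Finset.Icc 1 (j - 1), A ℓ⁆ *
            ((List.range (j - 1)).map fun m =>
              exp ((-(Complex.I * t)) • A (j - 1 - m))).prod)
          = exp ((-(Complex.I * t)) • A (K + 1)) *
            (∑ j ∈ Finset.Icc 2 K,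
              ((List.range (K - j)).map fun m =>
                exp ((-(Complex.I * t)) • A (K - m))).prod *
                ⁅exp ((-(Complex.I * t)) • A j),
                  (-Complex.I) • ∑ ℓ ∈ Finset.Icc 1 (j - 1), A ℓ⁆ *
                ((List.range (j - 1)).map fun m =>
                  exp ((-(Complex.I * t)) • A (j - 1 - m))).prod) := by
        rw [Finset.mul_sum]
        refine Finset.sum_congr rfl fun j hj => ?_
        have hjK : j ≤ K := (Finset.mem_Icc.mp hj).2
        rw [show K + 1 - j = (K - j) + 1 by omega, prod_split A K (K - j) t]
        simp only [mul_assoc]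
      rw [hsum, prod_split A K K t]
      simp only [Ring.lie_def, smul_mul_assoc, mul_smul_comm, add_mul, sub_mul,
        mul_add, mul_sub, smul_add, smul_sub, mul_assoc]
      abel

end Aux


/-- **Derivative identity for a product of exponentials.**
For Hermitian `A_1, …, A_K` with `H = A_1 + ⋯ + A_K` and
`S(t) = e^{-itA_K} ⋯ e^{-itA_1}` (largest index furthest to the left), one has
`S'(t) = (−iH) S(t) + Σ_{j=2}^{K} (e^{-itA_K} ⋯ e^{-itA_{j+1}}) [e^{-itA_j}, −i Σ_{ℓ<j} A_ℓ]
(e^{-itA_{j-1}} ⋯ e^{-itA_1})`. -/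
theorem deriv_product_formula
    {E : Type*} [NormedAddCommGroup E] [InnerProductSpace ℂ E] [FiniteDimensional ℂ E]
    (K : ℕ) (A : ℕ → E →L[ℂ] E) (hA : ∀ k, IsSelfAdjoint (A k))
    (H : E →L[ℂ] E) (hH : H = ∑ k ∈ Finset.Icc 1 K, A k)
    (S : ℝ → E →L[ℂ] E)
    (hS : ∀ t : ℝ,
      S t = ((List.range K).map fun m => exp ((-(Complex.I * t)) • A (K - m))).prod) :
    ∀ t : ℝ,
      HasDerivAt S
        ((-Complex.I) • (H * S t) +
          ∑ j ∈ Finset.Icc 2 K,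
            ((List.range (K - j)).map fun m => exp ((-(Complex.I * t)) • A (K - m))).prod *
              ⁅exp ((-(Complex.I * t)) • A j),
                (-Complex.I) • ∑ ℓ ∈ Finset.Icc 1 (j - 1), A ℓ⁆ *
              ((List.range (j - 1)).map fun m =>
                exp ((-(Complex.I * t)) • A (j - 1 - m))).prod)
        t := by
  intro t
  rw [funext hS, hH]
  exact prod_deriv_aux A K t
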